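/- Let k ≥ 2, let G be a simple graph, and let N be an integer such that every coloring of the edges of the complete graph K_N with 2·C(k,2) colors contains a monochromatic copy of G. Then for every covering [k]-uniform hypergraph H on N vertices and every 2-edge-coloring of H, there is a monochromatic Berge copy of G in H. -/

import Mathlib

/-- `G` has a Berge copy in the hypergraph `H` (a finite set of edges, each a finite
set of vertices) all of whose hyperedges satisfy the predicate `P`: there are distinct
core vertices `y v` (one for each vertex `v` of `G`) and distinct hyperedges `f e`
(one for each edge `e` of `G`) such that each edge `e = uv` of `G` satisfies
`{y u, y v} ⊆ f e`. -/
def HasBergeCopy {α V : Type*} (G : SimpleGraph α) (H : Finset (Finset V))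
    (P : Finset V → Prop) : Prop :=
  ∃ (y : α → V) (f : Sym2 α → Finset V),
    Function.Injective y ∧ Set.InjOn f G.edgeSet ∧
      ∀ e ∈ G.edgeSet, f e ∈ H ∧ P (f e) ∧ ∀ v ∈ e, y v ∈ f e

/-- If every `2·C(k,2)`-coloring of the edges of `K_N` contains a monochromatic copy
of `G`, then every 2-edge-colored covering `[k]`-uniform hypergraph on `N` vertices
contains a monochromatic Berge copy of `G`. -/
theorem mono_berge_from_multicolor_ramsey {α : Type*} (k : ℕ) (hk : 2 ≤ k)
    (G : SimpleGraph α) (N : ℕ)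
    (hRam : ∀ χ : Sym2 (Fin N) → Fin (2 * k.choose 2),
      ∃ (i : Fin (2 * k.choose 2)) (φ : α → Fin N),
        Function.Injective φ ∧ ∀ u v, G.Adj u v → χ s(φ u, φ v) = i)
    (H : Finset (Finset (Fin N)))
    (hunif : ∀ h ∈ H, 1 ≤ h.card ∧ h.card ≤ k)
    (hcov : ∀ u v : Fin N, u ≠ v → ∃ h ∈ H, u ∈ h ∧ v ∈ h)
    (col : Finset (Fin N) → Bool) :
    ∃ b : Bool, HasBergeCopy G H (fun h => col h = b) := by
  classical
  set K := k.choose 2 with hKdef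
  have hK : 0 < K := Nat.choose_pos hk
  -- a hyperedge containing each non-diagonal pair
  have hQ : ∀ p : Sym2 (Fin N), ¬ p.IsDiag → ∃ h, h ∈ H ∧ ∀ x ∈ p, x ∈ h := by
    intro p
    induction p using Sym2.ind with
    | _ u v =>
      intro hd
      rw [Sym2.mk_isDiag_iff] at hd
      obtain ⟨h, hH, hu, hv⟩ := hcov u v hd
      refine ⟨h, hH, fun x hx => ?_⟩
      rcases Sym2.mem_iff.1 hx with rfl | rfl <;> assumption
  let E : Sym2 (Fin N) → Finset (Fin N) := fun p =>
    if hp : ¬ p.IsDiag then (hQ p hp).choose else ∅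
  have hEmem : ∀ p, (hp : ¬ p.IsDiag) → E p ∈ H := by
    intro p hp; simp only [E, dif_pos hp]; exact (hQ p hp).choose_spec.1
  have hEsub : ∀ p, (hp : ¬ p.IsDiag) → ∀ x ∈ p, x ∈ E p := by
    intro p hp; simp only [E, dif_pos hp]; exact (hQ p hp).choose_spec.2
  -- the underlying 2-element set of a non-diagonal pair
  let F : Sym2 (Fin N) → Finset (Fin N) := fun p => {p.inf, p.sup}
  have hlt : ∀ p : Sym2 (Fin N), ¬ p.IsDiag → p.inf < p.sup := by
    intro p
    induction p using Sym2.ind with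
    | _ u v =>
      intro hd
      rw [Sym2.mk_isDiag_iff] at hd
      simpa using inf_lt_sup.2 hd
  have hmk : ∀ p : Sym2 (Fin N), s(p.inf, p.sup) = p := by
    intro p
    exact Sym2.sortEquiv.left_inv p
  have hFinj : ∀ p q : Sym2 (Fin N), ¬ p.IsDiag → ¬ q.IsDiag → F p = F q → p = q := by
    intro p q hp hq hFeq
    have h1 := hlt p hp
    have h2 := hlt q hq
    have hFeq' : ({p.inf, p.sup} : Finset (Fin N)) = {q.inf, q.sup} := hFeq
    have hpi : p.inf ∈ ({q.inf, q.sup} : Finset (Fin N)) := by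
      rw [← hFeq']; simp
    have hps : p.sup ∈ ({q.inf, q.sup} : Finset (Fin N)) := by
      rw [← hFeq']; simp
    have hqi : q.inf ∈ ({p.inf, p.sup} : Finset (Fin N)) := by
      rw [hFeq']; simp
    simp only [Finset.mem_insert, Finset.mem_singleton] at hpi hps hqi
    have heq1 : p.inf = q.inf := by
      rcases hpi with h | h
      · exact h
      · rcases hqi with h' | h'
        · omega
        · omega
    have heq2 : p.sup = q.sup := by
      rcases hps with h | h
      · omega
      · exact h
    rw [← hmk p, ← hmk q, heq1, heq2]
  have hFmem : ∀ p : Sym2 (Fin N), (hp : ¬ p.IsDiag) →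
      F p ∈ (E p).powersetCard 2 := by
    intro p hp
    rw [Finset.mem_powersetCard]
    constructor
    · intro x hx
      simp only [F, Finset.mem_insert, Finset.mem_singleton] at hx
      have hinfmem : p.inf ∈ p := by
        have := Sym2.mem_mk_left p.inf p.sup
        rwa [hmk p] at this
      have hsupmem : p.sup ∈ p := by
        have := Sym2.mem_mk_right p.inf p.sup
        rwa [hmk p] at this
      rcases hx with rfl | rfl
      · exact hEsub p hp _ hinfmem
      · exact hEsub p hp _ hsupmem
    · rw [Finset.card_insert_of_notMem (by simp [(hlt p hp).ne]),
        Finset.card_singleton]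
  -- index of the pair among the 2-subsets of its hyperedge
  let idx : Sym2 (Fin N) → ℕ := fun p =>
    List.idxOf (F p) ((E p).powersetCard 2).toList
  have hidx_lt : ∀ p : Sym2 (Fin N), ¬ p.IsDiag → idx p < K := by
    intro p hp
    have hmem : F p ∈ ((E p).powersetCard 2).toList :=
      Finset.mem_toList.2 (hFmem p hp)
    have h1 : idx p < ((E p).powersetCard 2).toList.length :=
      List.idxOf_lt_length_iff.2 hmem
    have h2 : ((E p).powersetCard 2).toList.length = (E p).card.choose 2 := by
      rw [Finset.length_toList, Finset.card_powersetCard]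
    have h3 : (E p).card.choose 2 ≤ K :=
      Nat.choose_le_choose 2 (hunif _ (hEmem p hp)).2
    omega
  -- the coloring
  let χ : Sym2 (Fin N) → Fin (2 * K) := fun p =>
    if hp : ¬ p.IsDiag then
      ⟨(cond (col (E p)) K 0) + idx p, by
        have := hidx_lt p hp
        cases col (E p) <;> simp <;> omega⟩
    else ⟨0, by omega⟩
  obtain ⟨i, φ, hφ, hmono⟩ := hRam χ
  set b : Bool := decide (K ≤ (i : ℕ)) with hbdef
  -- per-edge facts
  have key : ∀ u v : α, G.Adj u v →
      ¬ (s(φ u, φ v) : Sym2 (Fin N)).IsDiag ∧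
      col (E s(φ u, φ v)) = b ∧
      idx s(φ u, φ v) = (i : ℕ) - cond b K 0 := by
    intro u v huv
    have hne : φ u ≠ φ v := fun h => huv.ne (hφ h)
    have hp : ¬ (s(φ u, φ v) : Sym2 (Fin N)).IsDiag := by
      rw [Sym2.mk_isDiag_iff]; exact hne
    have hχ := hmono u v huv
    have hval : (cond (col (E s(φ u, φ v))) K 0) + idx s(φ u, φ v) = (i : ℕ) := by
      have h2 : χ s(φ u, φ v) = i := hχ
      simp only [χ] at h2
      rw [dif_pos hp] at h2
      exact congrArg Fin.val h2
    have hlt' := hidx_lt _ hp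
    refine ⟨hp, ?_, ?_⟩
    · cases hc : col (E s(φ u, φ v)) with
      | false =>
        rw [hc] at hval
        simp only [cond_false, Nat.zero_add] at hval
        have : ¬ K ≤ (i : ℕ) := by omega
        simp [hbdef, this]
      | true =>
        rw [hc] at hval
        simp only [cond_true] at hval
        have : K ≤ (i : ℕ) := by omega
        simp [hbdef, this]
    · cases hc : col (E s(φ u, φ v)) with
      | false =>
        rw [hc] at hval
        simp only [cond_false, Nat.zero_add] at hval
        have hnb : ¬ K ≤ (i : ℕ) := by omega
        have : b = false := by simp [hbdef, hnb]
        rw [this]; simp; omega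
      | true =>
        rw [hc] at hval
        simp only [cond_true] at hval
        have hyb : K ≤ (i : ℕ) := by omega
        have : b = true := by simp [hbdef, hyb]
        rw [this]; simp; omega
  refine ⟨b, φ, fun e => E (Sym2.map φ e), hφ, ?_, ?_⟩
  · -- injectivity on edges
    intro e1 he1 e2 he2 heq
    induction e1 using Sym2.ind with
    | _ u1 v1 =>
    induction e2 using Sym2.ind with
    | _ u2 v2 =>
      rw [SimpleGraph.mem_edgeSet] at he1 he2
      simp only [Sym2.map_pair_eq] at heq ⊢
      obtain ⟨hp1, hc1, hi1⟩ := key u1 v1 he1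
      obtain ⟨hp2, hc2, hi2⟩ := key u2 v2 he2
      have hidxeq : idx s(φ u1, φ v1) = idx s(φ u2, φ v2) := by rw [hi1, hi2]
      have hFeq : F s(φ u1, φ v1) = F s(φ u2, φ v2) := by
        have hm1 : F s(φ u1, φ v1) ∈ ((E s(φ u1, φ v1)).powersetCard 2).toList :=
          Finset.mem_toList.2 (hFmem _ hp1)
        have hm2 : F s(φ u2, φ v2) ∈ ((E s(φ u1, φ v1)).powersetCard 2).toList := by
          rw [heq]; exact Finset.mem_toList.2 (hFmem _ hp2)
        have : idx s(φ u1, φ v1) =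
            List.idxOf (F s(φ u2, φ v2)) ((E s(φ u1, φ v1)).powersetCard 2).toList := by
          rw [hidxeq]; simp only [idx]; rw [heq]
        exact (List.idxOf_inj hm1).1 this
      have hpeq : (s(φ u1, φ v1) : Sym2 (Fin N)) = s(φ u2, φ v2) :=
        hFinj _ _ hp1 hp2 hFeq
      have : Sym2.map φ s(u1, v1) = Sym2.map φ s(u2, v2) := by
        simpa [Sym2.map_pair_eq] using hpeq
      exact Sym2.map.injective hφ this
  · -- Berge conditions
    intro e he
    induction e using Sym2.ind with
    | _ u v =>
      rw [SimpleGraph.mem_edgeSet] at he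
      obtain ⟨hp, hc, -⟩ := key u v he
      simp only [Sym2.map_pair_eq]
      refine ⟨hEmem _ hp, hc, fun x hx => ?_⟩
      have : φ x ∈ (s(φ u, φ v) : Sym2 (Fin N)) := by
        rcases Sym2.mem_iff.1 hx with rfl | rfl <;> simp
      exact hEsub _ hp _ this
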